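/- If the feature distribution is identical across sensitive groups (P_1 = P_0 = P), then for any unaware classifier g, Δ_mis(g) ≤ E_{x∼P}[r(x)]. -/
import Mathlib


open MeasureTheory

lemma integrable_aux {𝒳 : Type*} [MeasurableSpace 𝒳]
    (P : Measure 𝒳) [IsProbabilityMeasure P]
    (η : 𝒳 → ℝ) (hη : Measurable η)
    (hb : ∀ x, η x ∈ Set.Icc (0 : ℝ) 1)
    (g : 𝒳 → Bool) (hg : Measurable g) :
    Integrable (fun x => (if g x then 1 - η x else η x)) P := by
  have hm : Measurable (fun x => (if g x then 1 - η x else η x)) := by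
    apply Measurable.ite (hg (MeasurableSet.singleton true)) (by fun_prop) hη
  refine (integrable_const (1:ℝ)).mono' hm.aestronglyMeasurable ?_
  filter_upwards with x
  obtain ⟨h0, h1⟩ := hb x
  by_cases h : g x <;> simp [h, Real.norm_eq_abs, abs_le] <;> constructor <;> linarith

/-- If the feature distribution is identical across sensitive groups
(`P₁ = P₀ = P`), then for any unaware classifier `g`,
`Δ_mis(g) ≤ E_{x∼P}[r(x)]`. -/
theorem stmt_4 {𝒳 : Type*} [MeasurableSpace 𝒳]
    (P : Measure 𝒳) [IsProbabilityMeasure P]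
    (η₀ η₁ : 𝒳 → ℝ) (hη₀ : Measurable η₀) (hη₁ : Measurable η₁)
    (hb₀ : ∀ x, η₀ x ∈ Set.Icc (0 : ℝ) 1) (hb₁ : ∀ x, η₁ x ∈ Set.Icc (0 : ℝ) 1)
    (g : 𝒳 → Bool) (hg : Measurable g) :
    |(∫ x, (if g x then 1 - η₁ x else η₁ x) ∂P)
        - ∫ x, (if g x then 1 - η₀ x else η₀ x) ∂P|
      ≤ ∫ x, |η₁ x - η₀ x| ∂P := by
  have h₁ := integrable_aux P η₁ hη₁ hb₁ g hg
  have h₀ := integrable_aux P η₀ hη₀ hb₀ g hg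
  rw [← integral_sub h₁ h₀]
  calc |∫ x, ((if g x then 1 - η₁ x else η₁ x) - (if g x then 1 - η₀ x else η₀ x)) ∂P|
      ≤ ∫ x, |(if g x then 1 - η₁ x else η₁ x) - (if g x then 1 - η₀ x else η₀ x)| ∂P :=
        by simpa [Real.norm_eq_abs] using norm_integral_le_integral_norm (μ := P) (fun x => (if g x then 1 - η₁ x else η₁ x) - (if g x then 1 - η₀ x else η₀ x))
    _ = ∫ x, |η₁ x - η₀ x| ∂P := by
        congr 1; funext x
        by_cases h : g x
        · simp only [h, if_true]
          rw [show (1 - η₁ x) - (1 - η₀ x) = -(η₁ x - η₀ x) by ring, abs_neg]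
        · simp [h]
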